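/- arXiv:2205.06387 — 2 statements merged into one kernel-verified Lean document; each statement's English description precedes it below -/
import Mathlib

section
/- Let I₁, I₂ : ℝ³ → ℝ be continuous functions of polynomial growth, i.e. there exist C > 0 and N ∈ ℕ with |Iⱼ(z)| ≤ C(1+|z|)^N for all z ∈ ℝ³ and j = 1,2. If (I₁ * μ)(v) = (I₂ * μ)(v) for every v ∈ ℝ³, then I₁(z) = I₂(z) for every z ∈ ℝ³. -/
open MeasureTheory Real Complex Filter
open scoped RealInnerProductSpace FourierTransform

noncomputable section

lemma gauss_int (b : ℝ) (hb : 0 < b) :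
    Integrable (fun u : EuclideanSpace ℝ (Fin 3) => rexp (-b * ‖u‖ ^ 2)) := by
  have h := (GaussianFourier.integrable_cexp_neg_mul_sq_norm_add
    (b := (b : ℂ)) (by simpa) 0 (0 : EuclideanSpace ℝ (Fin 3))).norm
  refine h.congr (Filter.Eventually.of_forall fun u => ?_)
  simp [Complex.norm_exp, ← Complex.ofReal_pow]

lemma gauss_bound (M : ℕ) (a x : ℝ) (hx : 0 ≤ x) :
    (1 + x) ^ M * rexp (-x ^ 2 + a * x)
      ≤ rexp (M + (a + M) ^ 2 / 2) * rexp (-(1/2) * x ^ 2) := by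
  have h1 : (1 + x) ^ M ≤ rexp (M * (1 + x)) := by
    calc (1 + x) ^ M ≤ (rexp (1 + x)) ^ M := by
          apply pow_le_pow_left₀ (by linarith)
          linarith [Real.add_one_le_exp (1 + x)]
      _ = rexp (M * (1 + x)) := by rw [← Real.exp_nat_mul]
  calc (1 + x) ^ M * rexp (-x ^ 2 + a * x)
      ≤ rexp (M * (1 + x)) * rexp (-x ^ 2 + a * x) :=
        mul_le_mul_of_nonneg_right h1 (Real.exp_nonneg _)
    _ = rexp (M * (1 + x) + (-x ^ 2 + a * x)) := (Real.exp_add _ _).symm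
    _ ≤ rexp ((M + (a + M) ^ 2 / 2) + (-(1/2) * x ^ 2)) := by
        apply Real.exp_le_exp.2
        nlinarith [sq_nonneg (x - (a + (M : ℝ)))]
    _ = _ := Real.exp_add _ _

lemma int_of_bound {E : Type*} [NormedAddCommGroup E]
    {g : EuclideanSpace ℝ (Fin 3) → E} (hg : AEStronglyMeasurable g volume)
    (c a : ℝ) (hc : 0 ≤ c) (M : ℕ)
    (hb : ∀ u, ‖g u‖ ≤ c * ((1 + ‖u‖) ^ M * rexp (-‖u‖ ^ 2 + a * ‖u‖))) :
    Integrable g := by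
  refine Integrable.mono'
    (g := fun u => (c * rexp (M + (a + M) ^ 2 / 2)) * rexp (-(1/2) * ‖u‖ ^ 2))
    ((gauss_int (1/2) (by norm_num)).const_mul _) hg
    (Filter.Eventually.of_forall fun u => ?_)
  calc ‖g u‖ ≤ c * ((1 + ‖u‖) ^ M * rexp (-‖u‖ ^ 2 + a * ‖u‖)) := hb u
    _ ≤ c * (rexp (M + (a + M) ^ 2 / 2) * rexp (-(1/2) * ‖u‖ ^ 2)) :=
        mul_le_mul_of_nonneg_left (gauss_bound M a ‖u‖ (norm_nonneg u)) hc
    _ = _ := by ring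

/-- **Injectivity of the Gauss–Weierstrass transform on continuous functions of
polynomial growth on ℝ³.** If `I₁, I₂ : ℝ³ → ℝ` are continuous with
`|Iⱼ(z)| ≤ C(1+|z|)^N` and their Gauss–Weierstrass transforms
`(I * μ)(v) = ∫ I(v−u) exp(−|u|²) du` agree for every `v`, then `I₁ = I₂`. -/
theorem gaussWeierstrass_injective_polyGrowth
    (I₁ I₂ : EuclideanSpace ℝ (Fin 3) → ℝ)
    (hI₁c : Continuous I₁) (hI₂c : Continuous I₂)
    (C : ℝ) (hC : 0 < C) (N : ℕ)
    (hI₁ : ∀ z, |I₁ z| ≤ C * (1 + ‖z‖) ^ N)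
    (hI₂ : ∀ z, |I₂ z| ≤ C * (1 + ‖z‖) ^ N)
    (h : ∀ v : EuclideanSpace ℝ (Fin 3),
      (∫ u, I₁ (v - u) * Real.exp (-‖u‖ ^ 2)) = ∫ u, I₂ (v - u) * Real.exp (-‖u‖ ^ 2)) :
    ∀ z, I₁ z = I₂ z := by
  set f : EuclideanSpace ℝ (Fin 3) → ℝ := fun u => I₁ u - I₂ u with hfdef
  have hfc : Continuous f := hI₁c.sub hI₂c
  have hfb : ∀ z, |f z| ≤ 2 * C * (1 + ‖z‖) ^ N := by
    intro z
    calc |I₁ z - I₂ z| ≤ |I₁ z| + |I₂ z| := abs_sub _ _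
      _ ≤ C * (1 + ‖z‖) ^ N + C * (1 + ‖z‖) ^ N := add_le_add (hI₁ z) (hI₂ z)
      _ = 2 * C * (1 + ‖z‖) ^ N := by ring
  -- basic inequality
  have hkey : ∀ v u : EuclideanSpace ℝ (Fin 3),
      (1 + ‖v - u‖) ^ N ≤ (1 + ‖v‖) ^ N * (1 + ‖u‖) ^ N := by
    intro v u
    rw [← mul_pow]
    apply pow_le_pow_left₀ (by positivity)
    have := norm_sub_le v u
    nlinarith [norm_nonneg v, norm_nonneg u, norm_nonneg (v - u)]
  -- integrability of each convolution integrand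
  have hint : ∀ (J : EuclideanSpace ℝ (Fin 3) → ℝ), Continuous J →
      (∀ z, |J z| ≤ 2 * C * (1 + ‖z‖) ^ N) →
      ∀ v, Integrable (fun u : EuclideanSpace ℝ (Fin 3) => J (v - u) * rexp (-‖u‖ ^ 2)) := by
    intro J hJc hJb v
    apply int_of_bound (c := 2 * C * (1 + ‖v‖) ^ N) (a := 0) (M := N)
    · exact ((hJc.comp (continuous_const.sub continuous_id)).mul
        ((Real.continuous_exp.comp (continuous_norm.pow 2).neg))).aestronglyMeasurable
    · positivity
    · intro u
      have h1 : |J (v - u)| ≤ 2 * C * ((1 + ‖v‖) ^ N * (1 + ‖u‖) ^ N) := by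
        calc |J (v - u)| ≤ 2 * C * (1 + ‖v - u‖) ^ N := hJb _
          _ ≤ _ := by
            have := hkey v u
            nlinarith [hC.le]
      have h2 : (0:ℝ) < rexp (-‖u‖ ^ 2) := Real.exp_pos _
      calc ‖J (v - u) * rexp (-‖u‖ ^ 2)‖ = |J (v - u)| * rexp (-‖u‖ ^ 2) := by
            rw [Real.norm_eq_abs, abs_mul, abs_of_pos h2]
        _ ≤ (2 * C * ((1 + ‖v‖) ^ N * (1 + ‖u‖) ^ N)) * rexp (-‖u‖ ^ 2) :=
            mul_le_mul_of_nonneg_right h1 h2.le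
        _ = 2 * C * (1 + ‖v‖) ^ N * ((1 + ‖u‖) ^ N * rexp (-‖u‖ ^ 2 + 0 * ‖u‖)) := by
            rw [zero_mul, add_zero]; ring
  -- the convolution of f with the gaussian vanishes
  have hconv : ∀ v, (∫ u, f (v - u) * rexp (-‖u‖ ^ 2)) = 0 := by
    intro v
    have e : (fun u : EuclideanSpace ℝ (Fin 3) => f (v - u) * rexp (-‖u‖ ^ 2))
        = fun u => I₁ (v - u) * rexp (-‖u‖ ^ 2) - I₂ (v - u) * rexp (-‖u‖ ^ 2) := by
      funext u; simp [hfdef]; ring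
    rw [e, integral_sub (hint I₁ hI₁c (fun z => by nlinarith [hI₁ z, hC.le, pow_nonneg (by positivity : (0:ℝ) ≤ 1 + ‖z‖) N]) v)
      (hint I₂ hI₂c (fun z => by nlinarith [hI₂ z, hC.le, pow_nonneg (by positivity : (0:ℝ) ≤ 1 + ‖z‖) N]) v), h v, sub_self]
  -- translation invariance
  have hG0 : ∀ v, (∫ u, f u * rexp (-‖v - u‖ ^ 2)) = 0 := by
    intro v
    have e := MeasureTheory.integral_sub_left_eq_self
      (fun u : EuclideanSpace ℝ (Fin 3) => f u * rexp (-‖v - u‖ ^ 2)) volume v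
    rw [← e, ← hconv v]
    congr 1; funext x; rw [sub_sub_cancel]
  -- expansion of the square
  have hG : ∀ v, (∫ u, (f u * rexp (-‖u‖ ^ 2)) * rexp (2 * ⟪v, u⟫)) = 0 := by
    intro v
    have e : (fun u : EuclideanSpace ℝ (Fin 3) => f u * rexp (-‖v - u‖ ^ 2))
        = fun u => rexp (-‖v‖ ^ 2) * ((f u * rexp (-‖u‖ ^ 2)) * rexp (2 * ⟪v, u⟫)) := by
      funext u
      rw [@norm_sub_sq_real]
      rw [show -(‖v‖ ^ 2 - 2 * ⟪v, u⟫ + ‖u‖ ^ 2) = -‖v‖ ^ 2 + (-‖u‖ ^ 2 + 2 * ⟪v, u⟫) by ring,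
        Real.exp_add, Real.exp_add]
      ring
    have h0 := hG0 v
    rw [e, MeasureTheory.integral_const_mul] at h0
    rcases mul_eq_zero.1 h0 with h1 | h1
    · exact absurd h1 (Real.exp_ne_zero _)
    · exact h1
  -- the weighted function
  set g : EuclideanSpace ℝ (Fin 3) → ℂ := fun u => ((f u * rexp (-‖u‖ ^ 2) : ℝ) : ℂ) with hgdef
  have hgc : Continuous g :=
    Complex.continuous_ofReal.comp (hfc.mul (Real.continuous_exp.comp (continuous_norm.pow 2).neg))
  have hgnorm : ∀ u, ‖g u‖ = |f u| * rexp (-‖u‖ ^ 2) := by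
    intro u
    rw [hgdef]
    rw [Complex.norm_real, Real.norm_eq_abs, abs_mul, abs_of_pos (Real.exp_pos _)]
  have hgb : ∀ a : ℝ, 0 ≤ a → ∀ u, ‖g u‖ * rexp (a * ‖u‖)
      ≤ 2 * C * ((1 + ‖u‖) ^ N * rexp (-‖u‖ ^ 2 + a * ‖u‖)) := by
    intro a _ u
    rw [hgnorm]
    calc |f u| * rexp (-‖u‖ ^ 2) * rexp (a * ‖u‖)
        ≤ (2 * C * (1 + ‖u‖) ^ N) * rexp (-‖u‖ ^ 2) * rexp (a * ‖u‖) :=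
          mul_le_mul_of_nonneg_right
            (mul_le_mul_of_nonneg_right (hfb u) (Real.exp_nonneg _)) (Real.exp_nonneg _)
      _ = _ := by rw [Real.exp_add]; ring
  have hgb0 : ∀ u, ‖g u‖ ≤ 2 * C * ((1 + ‖u‖) ^ N * rexp (-‖u‖ ^ 2 + 0 * ‖u‖)) := by
    intro u
    have := hgb 0 le_rfl u
    simpa using this
  have hgi : Integrable g :=
    int_of_bound hgc.aestronglyMeasurable (2 * C) 0 (by positivity) N hgb0
  -- Fourier transform of g vanishes
  have hF : ∀ ξ, 𝓕 g ξ = 0 := by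
    intro ξ
    set c : EuclideanSpace ℝ (Fin 3) → ℂ := fun u => ((2 * ⟪ξ, u⟫ : ℝ) : ℂ) with hcdef
    have hcc : Continuous c :=
      Complex.continuous_ofReal.comp (continuous_const.mul (continuous_const.inner continuous_id))
    have hcnorm : ∀ u, ‖c u‖ ≤ 2 * ‖ξ‖ * ‖u‖ := by
      intro u
      rw [hcdef]
      rw [Complex.norm_real, Real.norm_eq_abs, abs_mul]
      have h1 := abs_real_inner_le_norm ξ u
      have h2 : |(2:ℝ)| = 2 := by norm_num
      rw [h2, mul_assoc]
      nlinarith [abs_nonneg (⟪ξ, u⟫ : ℝ)]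
    have hcre : ∀ (u) (z : ℂ), (c u * z).re = (2 * ⟪ξ, u⟫) * z.re := by
      intro u z
      rw [hcdef]
      exact Complex.re_ofReal_mul _ _
    set F : ℂ → EuclideanSpace ℝ (Fin 3) → ℂ := fun z u => g u * Complex.exp (c u * z) with hFdef
    set φ : ℂ → ℂ := fun z => ∫ u, F z u with hφdef
    -- norm of the integrand
    have hFnorm : ∀ (z : ℂ) (u), ‖F z u‖ = ‖g u‖ * rexp ((2 * ⟪ξ, u⟫) * z.re) := by
      intro z u
      rw [hFdef]
      rw [norm_mul, Complex.norm_exp, hcre]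
    have hexpb : ∀ (R : ℝ) (z : ℂ), ‖z‖ ≤ R → ∀ u,
        rexp ((2 * ⟪ξ, u⟫) * z.re) ≤ rexp ((2 * R * ‖ξ‖) * ‖u‖) := by
      intro R z hz u
      apply Real.exp_le_exp.2
      have h1 : |(⟪ξ, u⟫ : ℝ)| ≤ ‖ξ‖ * ‖u‖ := abs_real_inner_le_norm ξ u
      have h2 : |z.re| ≤ R := le_trans (Complex.abs_re_le_norm z) hz
      have h3 : (2 * ⟪ξ, u⟫) * z.re ≤ 2 * |(⟪ξ, u⟫ : ℝ)| * |z.re| := by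
        rw [mul_assoc]
        calc 2 * ((⟪ξ, u⟫ : ℝ) * z.re) ≤ 2 * |(⟪ξ, u⟫ : ℝ) * z.re| := by
              have := le_abs_self ((⟪ξ, u⟫ : ℝ) * z.re); linarith
          _ = 2 * (|(⟪ξ, u⟫ : ℝ)| * |z.re|) := by rw [abs_mul]
          _ = _ := by ring
      have h4 : (0:ℝ) ≤ |(⟪ξ, u⟫ : ℝ)| := abs_nonneg _
      nlinarith [abs_nonneg z.re, norm_nonneg u, norm_nonneg ξ]
    -- integrability of F z for each z
    have hFmeas : ∀ z : ℂ, AEStronglyMeasurable (F z) volume := by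
      intro z
      exact (hgc.mul (Complex.continuous_exp.comp (hcc.mul continuous_const))).aestronglyMeasurable
    have hFint : ∀ z : ℂ, Integrable (F z) volume := by
      intro z
      apply int_of_bound (hFmeas z) (2 * C) (2 * ‖z‖ * ‖ξ‖) (by positivity) N
      intro u
      calc ‖F z u‖ = ‖g u‖ * rexp ((2 * ⟪ξ, u⟫) * z.re) := hFnorm z u
        _ ≤ ‖g u‖ * rexp ((2 * ‖z‖ * ‖ξ‖) * ‖u‖) :=
            mul_le_mul_of_nonneg_left (hexpb ‖z‖ z le_rfl u) (norm_nonneg _)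
        _ ≤ _ := hgb _ (by positivity) u
    -- differentiability of φ
    have hφdiff : Differentiable ℂ φ := by
      intro z₀
      have key := hasDerivAt_integral_of_dominated_loc_of_deriv_le
        (F := F) (F' := fun z u => g u * (Complex.exp (c u * z) * c u))
        (x₀ := z₀)
        (bound := fun u => (2 * C * (2 * ‖ξ‖ + 2)) *
          ((1 + ‖u‖) ^ (N + 1) * rexp (-‖u‖ ^ 2 + (2 * (‖z₀‖ + 1) * ‖ξ‖) * ‖u‖)))
        (Metric.ball_mem_nhds z₀ one_pos)
        (Filter.Eventually.of_forall fun z => hFmeas z)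
        (hFint z₀)
        ((hgc.mul ((Complex.continuous_exp.comp (hcc.mul continuous_const)).mul hcc)).aestronglyMeasurable)
        (Filter.Eventually.of_forall fun u => ?_)
        ?_
        (Filter.Eventually.of_forall fun u => ?_)
      · exact ((key.2).differentiableAt)
      · -- bound on the derivative
        intro z hz
        have hzn : ‖z‖ ≤ ‖z₀‖ + 1 := by
          have := mem_ball_iff_norm.1 hz
          have h5 := norm_sub_norm_le z z₀
          linarith
        calc ‖g u * (Complex.exp (c u * z) * c u)‖
            = ‖g u‖ * (rexp ((2 * ⟪ξ, u⟫) * z.re) * ‖c u‖) := by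
              rw [norm_mul, norm_mul, Complex.norm_exp, hcre]
          _ ≤ ‖g u‖ * (rexp ((2 * (‖z₀‖ + 1) * ‖ξ‖) * ‖u‖) * (2 * ‖ξ‖ * ‖u‖)) := by
              apply mul_le_mul_of_nonneg_left _ (norm_nonneg _)
              apply mul_le_mul (hexpb _ z hzn u) (hcnorm u) (norm_nonneg _) (Real.exp_nonneg _)
          _ ≤ (2 * C * ((1 + ‖u‖) ^ N * rexp (-‖u‖ ^ 2 + (2 * (‖z₀‖ + 1) * ‖ξ‖) * ‖u‖)))
                * (2 * ‖ξ‖ * ‖u‖) := by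
              rw [show ‖g u‖ * (rexp ((2 * (‖z₀‖ + 1) * ‖ξ‖) * ‖u‖) * (2 * ‖ξ‖ * ‖u‖))
                  = (‖g u‖ * rexp ((2 * (‖z₀‖ + 1) * ‖ξ‖) * ‖u‖)) * (2 * ‖ξ‖ * ‖u‖) by ring]
              apply mul_le_mul_of_nonneg_right (hgb _ (by positivity) u) (by positivity)
          _ ≤ (2 * C * (2 * ‖ξ‖ + 2)) *
              ((1 + ‖u‖) ^ (N + 1) * rexp (-‖u‖ ^ 2 + (2 * (‖z₀‖ + 1) * ‖ξ‖) * ‖u‖)) := by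
              have hu : ‖u‖ ≤ 1 + ‖u‖ := by linarith [norm_nonneg u]
              have hp : (0:ℝ) ≤ (1 + ‖u‖) ^ N := by positivity
              have he : (0:ℝ) ≤ rexp (-‖u‖ ^ 2 + (2 * (‖z₀‖ + 1) * ‖ξ‖) * ‖u‖) := Real.exp_nonneg _
              rw [pow_succ (1 + ‖u‖) N]
              nlinarith [mul_nonneg (mul_nonneg hC.le (mul_nonneg hp he)) (norm_nonneg ξ),
                mul_nonneg (mul_nonneg hC.le (mul_nonneg hp he)) (norm_nonneg u),
                mul_nonneg hC.le (mul_nonneg hp he),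
                mul_nonneg (mul_nonneg (mul_nonneg hC.le (mul_nonneg hp he)) (norm_nonneg ξ)) (norm_nonneg u)]
      · -- the bound is integrable
        apply int_of_bound (g := fun u : EuclideanSpace ℝ (Fin 3) =>
            (2 * C * (2 * ‖ξ‖ + 2)) *
            ((1 + ‖u‖) ^ (N + 1) * rexp (-‖u‖ ^ 2 + (2 * (‖z₀‖ + 1) * ‖ξ‖) * ‖u‖)))
          ?_ (2 * C * (2 * ‖ξ‖ + 2)) (2 * (‖z₀‖ + 1) * ‖ξ‖) (by positivity) (N + 1) ?_
        · apply Continuous.aestronglyMeasurable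
          fun_prop
        · intro u
          exact le_of_eq (abs_of_nonneg (by positivity))
      · -- pointwise derivative
        intro z hz
        have h1 : HasDerivAt (fun w : ℂ => c u * w) (c u) z := by
          simpa using (hasDerivAt_id z).const_mul (c u)
        exact (h1.cexp).const_mul (g u)
    -- φ vanishes on the reals
    have hreal : ∀ t : ℝ, φ (t : ℂ) = 0 := by
      intro t
      have hv := hG (t • ξ)
      simp_rw [real_inner_smul_left] at hv
      calc φ (t : ℂ)
          = ∫ u, ((f u * rexp (-‖u‖ ^ 2) * rexp (2 * (t * ⟪ξ, u⟫)) : ℝ) : ℂ) := by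
            show (∫ u, F (t : ℂ) u) = _
            congr 1; funext u
            simp only [hFdef, hgdef, hcdef]
            rw [← Complex.ofReal_mul, ← Complex.ofReal_exp, ← Complex.ofReal_mul]
            norm_cast
            ring_nf
        _ = ((∫ u, f u * rexp (-‖u‖ ^ 2) * rexp (2 * (t * ⟪ξ, u⟫)) : ℝ) : ℂ) :=
            integral_ofReal
        _ = 0 := by rw [hv]; norm_num
    -- φ vanishes frequently near 0
    have hfreq : ∃ᶠ z in nhdsWithin (0 : ℂ) {(0 : ℂ)}ᶜ, φ z = 0 := by
      have ht : Filter.Tendsto (fun n : ℕ => ((1 / (n + 1) : ℝ) : ℂ)) Filter.atTop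
          (nhdsWithin (0 : ℂ) {(0 : ℂ)}ᶜ) := by
        apply tendsto_nhdsWithin_of_tendsto_nhds_of_eventually_within
        · have h1 : Filter.Tendsto (fun n : ℕ => (1 / (n + 1) : ℝ)) Filter.atTop (nhds 0) :=
            tendsto_one_div_add_atTop_nhds_zero_nat
          have h2 := (Complex.continuous_ofReal.tendsto 0).comp h1
          simpa [Function.comp_def] using h2
        · refine Filter.Eventually.of_forall fun n => ?_
          simp only [Set.mem_compl_iff, Set.mem_singleton_iff]
          exact Complex.ofReal_ne_zero.2 (by positivity)
      exact ht.frequently (Filter.Frequently.of_forall fun n => hreal _)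
    -- identity theorem: φ is identically zero
    have hφ0 : ∀ z, φ z = 0 := by
      intro z
      exact (AnalyticOnNhd.eqOn_zero_of_preconnected_of_frequently_eq_zero
        (fun w _ => hφdiff.analyticAt w) isPreconnected_univ (Set.mem_univ (0 : ℂ)) hfreq)
        (Set.mem_univ z)
    -- evaluate at -π i
    rw [Real.fourier_eq', ← hφ0 (-(π : ℂ) * Complex.I)]
    show _ = (∫ u, F (-(π : ℂ) * Complex.I) u)
    congr 1; funext u
    simp only [hFdef, hcdef, smul_eq_mul]
    rw [mul_comm]
    congr 1
    rw [real_inner_comm u ξ]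
    push_cast
    ring
  -- conclude by Fourier inversion
  have hFg0 : 𝓕 g = 0 := funext hF
  have hginv := hgc.fourierInv_fourier_eq hgi (by rw [hFg0]; exact integrable_zero _ _ _)
  have hg0 : ∀ u, g u = 0 := by
    intro u
    have h1 : 𝓕⁻ (𝓕 g) u = g u := congrFun hginv u
    rw [hFg0] at h1
    rw [← h1, Real.fourierInv_eq]
    simp
  intro z
  have h2 := hg0 z
  simp only [hgdef] at h2
  have h5 : f z * rexp (-‖z‖ ^ 2) = 0 := by exact_mod_cast h2
  have h6 : f z = 0 := by
    rcases mul_eq_zero.1 h5 with h' | h'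
    · exact h'
    · exact absurd h' (Real.exp_ne_zero _)
  have h7 : I₁ z - I₂ z = 0 := h6
  linarith

end
end

section
/- Let f₁, f₂ : (0,∞) → ℝ be measurable functions of polynomial growth, i.e. there exist C > 0 and N ∈ ℕ with |fⱼ(r)| ≤ C(1+r)^N for all r > 0 and j = 1,2. If ∫_{ℝ²} exp(−|y+ζ|²) f₁(|y|) dy = ∫_{ℝ²} exp(−|y+ζ|²) f₂(|y|) dy for every ζ ∈ ℝ², then f₁(r) = f₂(r) for almost every r > 0. -/
open MeasureTheory Real Filter Metric
open scoped RealInnerProductSpace FourierTransform SchwartzMap ContDiff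

noncomputable section

namespace GWaux

abbrev V := EuclideanSpace ℝ (Fin 2)

lemma key_scalar_bound (N : ℕ) (a r : ℝ) (hr : 0 ≤ r) :
    (1 + r) ^ N * Real.exp (a * r - r ^ 2) ≤
      Real.exp ((N + a) ^ 2) * Real.exp (-(r ^ 2) / 2) := by
  have h1 : (1 + r) ^ N ≤ Real.exp (N * r) := by
    have h2 : (1 + r) ≤ Real.exp r := by linarith [Real.add_one_le_exp r]
    calc (1 + r) ^ N ≤ (Real.exp r) ^ N := pow_le_pow_left₀ (by linarith) h2 N
      _ = Real.exp (N * r) := by rw [← Real.exp_nat_mul]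
  calc (1 + r) ^ N * Real.exp (a * r - r ^ 2)
      ≤ Real.exp (N * r) * Real.exp (a * r - r ^ 2) :=
        mul_le_mul_of_nonneg_right h1 (Real.exp_nonneg _)
    _ = Real.exp (N * r + (a * r - r ^ 2)) := by rw [← Real.exp_add]
    _ ≤ Real.exp ((N + a) ^ 2 + -(r ^ 2) / 2) := by
        apply Real.exp_le_exp.2; nlinarith [sq_nonneg ((N : ℝ) + a - r)]
    _ = _ := by rw [Real.exp_add]

lemma integrable_gaussV : Integrable (fun y : V ↦ Real.exp (-(‖y‖ ^ 2) / 2)) := by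
  have h := (GaussianFourier.integrable_cexp_neg_mul_sq_norm_add
      (V := V) (b := (1/2 : ℂ)) (by norm_num) 0 0).norm
  refine h.congr (Filter.Eventually.of_forall fun y ↦ ?_)
  simp [Complex.norm_exp]
  norm_cast
  ring_nf

lemma integrable_majorant (N : ℕ) (a : ℝ) :
    Integrable (fun y : V ↦ (1 + ‖y‖) ^ N * Real.exp (a * ‖y‖ - ‖y‖ ^ 2)) := by
  refine Integrable.mono' (integrable_gaussV.const_mul (Real.exp ((N + a) ^ 2))) ?_ ?_
  · exact Continuous.aestronglyMeasurable (by fun_prop)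
  · filter_upwards with y
    rw [Real.norm_eq_abs, abs_of_nonneg (by positivity)]
    exact key_scalar_bound N a ‖y‖ (norm_nonneg y)

lemma norm_add_sq_ge (y ζ : V) : ‖y‖ ^ 2 - 2 * ‖ζ‖ * ‖y‖ ≤ ‖y + ζ‖ ^ 2 := by
  have h1 : ‖y‖ ≤ ‖y + ζ‖ + ‖ζ‖ := by
    calc ‖y‖ = ‖y + ζ - ζ‖ := by simp
    _ ≤ ‖y + ζ‖ + ‖ζ‖ := norm_sub_le _ _
  rcases le_or_gt ‖ζ‖ ‖y‖ with hc | hc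
  · nlinarith [norm_nonneg (y + ζ), norm_nonneg ζ]
  · nlinarith [norm_nonneg (y + ζ), norm_nonneg y]

lemma ae_norm_pos : ∀ᵐ y : V ∂volume, 0 < ‖y‖ := by
  have h : {y : V | ¬ 0 < ‖y‖} = {0} := by
    ext y
    simp [not_lt, Set.mem_setOf_eq, norm_le_zero_iff]
  rw [ae_iff, h]
  exact measure_singleton 0

lemma integrable_kernel (f : ℝ → ℝ) (hm : Measurable f) (C : ℝ) (N : ℕ)
    (hf : ∀ r > (0:ℝ), |f r| ≤ C * (1 + r) ^ N) (ζ : V) :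
    Integrable (fun y : V ↦ Real.exp (-‖y + ζ‖ ^ 2) * f ‖y‖) := by
  refine Integrable.mono' ((integrable_majorant N (2 * ‖ζ‖)).const_mul C) ?_ ?_
  · exact (Continuous.aestronglyMeasurable (by fun_prop)).mul
      (hm.comp measurable_norm).aestronglyMeasurable
  · filter_upwards [ae_norm_pos] with y hy
    rw [Real.norm_eq_abs, abs_mul, abs_of_nonneg (Real.exp_nonneg _)]
    calc Real.exp (-‖y + ζ‖ ^ 2) * |f ‖y‖|
        ≤ Real.exp (2 * ‖ζ‖ * ‖y‖ - ‖y‖ ^ 2) * (C * (1 + ‖y‖) ^ N) := by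
          apply mul_le_mul (Real.exp_le_exp.2 (by nlinarith [norm_add_sq_ge y ζ]))
            (hf _ hy) (abs_nonneg _) (Real.exp_nonneg _)
      _ = C * ((1 + ‖y‖) ^ N * Real.exp (2 * ‖ζ‖ * ‖y‖ - ‖y‖ ^ 2)) := by ring


/-- If the two-sided Laplace transform of a Gaussian-dominated function vanishes
on all real lines, then its Fourier transform vanishes. -/
lemma fourier_vanish (G : V → ℝ) (hGm : Measurable G) (D : ℝ) (hD : 0 ≤ D) (N : ℕ)
    (hGb : ∀ᵐ y : V ∂volume, |G y| ≤ D * ((1 + ‖y‖) ^ N * Real.exp (-(‖y‖ ^ 2))))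
    (hz : ∀ (w : V) (t : ℝ), ∫ y : V, Real.exp (t * ⟪y, w⟫) * G y = 0) (w : V) :
    𝓕 (fun y : V ↦ (G y : ℂ)) w = 0 := by
  set Φ : ℂ → ℂ := fun z ↦ ∫ y : V, Complex.exp (z * ⟪y, w⟫) * (G y : ℂ) with hΦdef
  have hci : Continuous fun y : V ↦ ((⟪y, w⟫ : ℝ) : ℂ) :=
    Complex.continuous_ofReal.comp (continuous_id.inner continuous_const)
  have hmeas : ∀ z : ℂ,
      AEStronglyMeasurable (fun y : V ↦ Complex.exp (z * ⟪y, w⟫) * (G y : ℂ)) volume := by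
    intro z
    exact (Continuous.aestronglyMeasurable
        (Complex.continuous_exp.comp (continuous_const.mul hci))).mul
      (Complex.measurable_ofReal.comp hGm).aestronglyMeasurable
  -- pointwise bound
  have hbound : ∀ (R : ℝ) (z : ℂ), ‖z‖ ≤ R → ∀ y : V,
      |G y| ≤ D * ((1 + ‖y‖) ^ N * Real.exp (-(‖y‖ ^ 2))) →
      ‖Complex.exp (z * ⟪y, w⟫) * (G y : ℂ)‖ ≤
        D * ((1 + ‖y‖) ^ N * Real.exp ((R * ‖w‖) * ‖y‖ - ‖y‖ ^ 2)) := by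
    intro R z hzR y hy
    have hR0 : 0 ≤ R := le_trans (norm_nonneg z) hzR
    have h1 : ‖Complex.exp (z * ⟪y, w⟫) * (G y : ℂ)‖
        = Real.exp (z.re * ⟪y, w⟫) * |G y| := by
      rw [norm_mul, Complex.norm_exp, Complex.norm_real, Real.norm_eq_abs]
      congr 2
      simp [Complex.mul_re]
    rw [h1]
    have h2 : z.re * ⟪y, w⟫ ≤ (R * ‖w‖) * ‖y‖ := by
      calc z.re * ⟪y, w⟫ ≤ |z.re * ⟪y, w⟫| := le_abs_self _
        _ = |z.re| * |⟪y, w⟫| := abs_mul _ _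
        _ ≤ R * (‖y‖ * ‖w‖) :=
            mul_le_mul (le_trans (Complex.abs_re_le_norm z) hzR)
              (abs_real_inner_le_norm y w) (abs_nonneg _) hR0
        _ = (R * ‖w‖) * ‖y‖ := by ring
    calc Real.exp (z.re * ⟪y, w⟫) * |G y|
        ≤ Real.exp ((R * ‖w‖) * ‖y‖) * (D * ((1 + ‖y‖) ^ N * Real.exp (-(‖y‖ ^ 2)))) :=
          mul_le_mul (Real.exp_le_exp.2 h2) hy (abs_nonneg _) (Real.exp_nonneg _)
      _ = D * ((1 + ‖y‖) ^ N * (Real.exp ((R * ‖w‖) * ‖y‖) * Real.exp (-(‖y‖ ^ 2)))) := by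
          ring
      _ = D * ((1 + ‖y‖) ^ N * Real.exp ((R * ‖w‖) * ‖y‖ - ‖y‖ ^ 2)) := by
          rw [← Real.exp_add]; ring_nf
  have hint : ∀ z : ℂ, Integrable (fun y : V ↦ Complex.exp (z * ⟪y, w⟫) * (G y : ℂ)) := by
    intro z
    refine Integrable.mono' ((integrable_majorant N (‖z‖ * ‖w‖)).const_mul D) (hmeas z) ?_
    filter_upwards [hGb] with y hy
    exact hbound ‖z‖ z le_rfl y hy
  -- differentiability of Φ
  have hdiff : Differentiable ℂ Φ := by
    intro z₀
    have main := hasDerivAt_integral_of_dominated_loc_of_deriv_le (μ := (volume : Measure V))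
      (F := fun z (y : V) ↦ Complex.exp (z * ⟪y, w⟫) * (G y : ℂ))
      (F' := fun z (y : V) ↦ ((⟪y, w⟫ : ℝ) : ℂ) * (Complex.exp (z * ⟪y, w⟫) * (G y : ℂ)))
      (x₀ := z₀)
      (bound := fun y : V ↦ (D * ‖w‖) *
        ((1 + ‖y‖) ^ (N + 1) * Real.exp (((‖z₀‖ + 1) * ‖w‖) * ‖y‖ - ‖y‖ ^ 2)))
      (ball_mem_nhds z₀ one_pos)
      (Filter.Eventually.of_forall fun z ↦ hmeas z) (hint z₀)
      ((Continuous.aestronglyMeasurable hci).mul (hmeas z₀))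
      ?_ (((integrable_majorant (N + 1) ((‖z₀‖ + 1) * ‖w‖)).const_mul (D * ‖w‖))) ?_
    · exact main.2.differentiableAt
    · -- bound
      filter_upwards [hGb] with y hy z hzball
      have hz1 : ‖z‖ ≤ ‖z₀‖ + 1 := by
        have h := mem_ball_iff_norm.1 hzball
        calc ‖z‖ = ‖z₀ + (z - z₀)‖ := by ring_nf
          _ ≤ ‖z₀‖ + ‖z - z₀‖ := norm_add_le _ _
          _ ≤ ‖z₀‖ + 1 := by linarith
      rw [norm_mul]
      calc ‖((⟪y, w⟫ : ℝ) : ℂ)‖ * ‖Complex.exp (z * ⟪y, w⟫) * (G y : ℂ)‖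
          ≤ (‖y‖ * ‖w‖) * (D * ((1 + ‖y‖) ^ N *
              Real.exp (((‖z₀‖ + 1) * ‖w‖) * ‖y‖ - ‖y‖ ^ 2))) := by
            apply mul_le_mul _ (hbound (‖z₀‖ + 1) z hz1 y hy) (norm_nonneg _)
              (mul_nonneg (norm_nonneg y) (norm_nonneg w))
            rw [Complex.norm_real, Real.norm_eq_abs]
            exact abs_real_inner_le_norm y w
        _ = (D * ‖w‖) * ((‖y‖ * (1 + ‖y‖) ^ N) *
              Real.exp (((‖z₀‖ + 1) * ‖w‖) * ‖y‖ - ‖y‖ ^ 2)) := by ring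
        _ ≤ (D * ‖w‖) *
            ((1 + ‖y‖) ^ (N + 1) * Real.exp (((‖z₀‖ + 1) * ‖w‖) * ‖y‖ - ‖y‖ ^ 2)) := by
            have hyN : ‖y‖ * (1 + ‖y‖) ^ N ≤ (1 + ‖y‖) ^ (N + 1) := by
              rw [pow_succ]
              have h1 : (0:ℝ) ≤ (1 + ‖y‖) ^ N := by positivity
              nlinarith [norm_nonneg y]
            exact mul_le_mul_of_nonneg_left
              (mul_le_mul_of_nonneg_right hyN (Real.exp_nonneg _))
              (mul_nonneg hD (norm_nonneg w))
    · -- derivative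
      filter_upwards with y z hzball
      have h1 : HasDerivAt (fun z : ℂ ↦ z * ((⟪y, w⟫ : ℝ) : ℂ)) ((⟪y, w⟫ : ℝ) : ℂ) z := by
        simpa using (hasDerivAt_id z).mul_const ((⟪y, w⟫ : ℝ) : ℂ)
      have h2 := (h1.cexp).mul_const ((G y : ℂ))
      convert h2 using 1
      · rfl
      · ring
  -- Φ vanishes on the reals
  have hΦreal : ∀ t : ℝ, Φ (t : ℂ) = 0 := by
    intro t
    have h0 := hz w t
    have heq : (fun y : V ↦ Complex.exp ((t : ℂ) * ⟪y, w⟫) * (G y : ℂ))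
        = fun y : V ↦ ((Real.exp (t * ⟪y, w⟫) * G y : ℝ) : ℂ) := by
      funext y; push_cast; ring
    rw [hΦdef]
    simp only [heq]
    have h4 : (∫ y : V, ((Real.exp (t * ⟪y, w⟫) * G y : ℝ) : ℂ))
        = ((∫ y : V, Real.exp (t * ⟪y, w⟫) * G y : ℝ) : ℂ) := integral_ofReal
    rw [h4, h0, Complex.ofReal_zero]
  -- identity theorem
  have hΦ0 : ∀ z : ℂ, Φ z = 0 := by
    have hA : AnalyticOnNhd ℂ Φ Set.univ := hdiff.differentiableOn.analyticOnNhd isOpen_univ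
    have ht : Tendsto (fun n : ℕ ↦ (((((n : ℝ) + 1)⁻¹ : ℝ)) : ℂ)) atTop
        (nhdsWithin (0 : ℂ) {(0 : ℂ)}ᶜ) := by
      refine tendsto_nhdsWithin_iff.mpr ⟨?_, ?_⟩
      · have h1 : Tendsto (fun n : ℕ ↦ (((n : ℝ) + 1)⁻¹ : ℝ)) atTop (nhds 0) :=
          tendsto_one_div_add_atTop_nhds_zero_nat.congr (by intro n; rw [one_div])
        have h2 := (Complex.continuous_ofReal.tendsto 0).comp h1
        have h3 : Tendsto (fun n : ℕ ↦ (((((n : ℝ) + 1)⁻¹ : ℝ)) : ℂ)) atTop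
            (nhds (((0 : ℝ) : ℂ))) := h2
        simpa using h3
      · filter_upwards with n
        simp only [Set.mem_compl_iff, Set.mem_singleton_iff]
        intro hcontra
        rw [Complex.ofReal_eq_zero] at hcontra
        have : ((n : ℝ) + 1)⁻¹ ≠ 0 := by positivity
        exact this hcontra
    have freq : ∃ᶠ z in nhdsWithin (0 : ℂ) {(0 : ℂ)}ᶜ, Φ z = 0 :=
      ht.frequently (Frequently.of_forall fun n ↦ hΦreal _)
    have := hA.eqOn_zero_of_preconnected_of_frequently_eq_zero isPreconnected_univ
      (Set.mem_univ (0 : ℂ)) freq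
    intro z
    exact this (Set.mem_univ z)
  -- conclude
  rw [Real.fourier_eq']
  have h := hΦ0 ((-2 * (π : ℝ)) * Complex.I)
  rw [hΦdef] at h
  rw [← h]
  apply integral_congr_ae
  filter_upwards with y
  rw [smul_eq_mul]
  congr 1
  push_cast
  ring


end GWaux

namespace GWaux2

variable {V : Type*} [NormedAddCommGroup V] [InnerProductSpace ℝ V]
  [MeasurableSpace V] [BorelSpace V] [FiniteDimensional ℝ V]

/-- A smooth compactly supported function as a Schwartz map. -/
def toSchwartz (φ : V → ℂ) (hsm : ContDiff ℝ ∞ φ) (hsupp : HasCompactSupport φ) :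
    𝓢(V, ℂ) where
  toFun := φ
  smooth' := hsm
  decay' := by
    intro k n
    have hFc : Continuous fun x : V ↦ ‖x‖ ^ k * ‖iteratedFDeriv ℝ n φ x‖ :=
      (continuous_norm.pow k).mul (hsm.continuous_iteratedFDeriv (by exact_mod_cast le_top)).norm
    have hFsupp : HasCompactSupport fun x : V ↦ ‖x‖ ^ k * ‖iteratedFDeriv ℝ n φ x‖ :=
      ((hsupp.iteratedFDeriv n).norm).mul_left
    obtain ⟨M, hM⟩ := hFsupp.exists_bound_of_continuous hFc
    exact ⟨M, fun x ↦ by simpa using hM x⟩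

/-- If an integrable function has vanishing Fourier transform, it vanishes a.e. -/
lemma ae_zero_of_fourier_zero (G : V → ℂ) (hGi : Integrable G)
    (hF : ∀ w : V, 𝓕 G w = 0) : ∀ᵐ y : V ∂volume, G y = 0 := by
  apply ae_eq_zero_of_integral_contDiff_smul_eq_zero hGi.locallyIntegrable
  intro φ hφsm hφsupp
  -- promote φ to a complex Schwartz function
  have hsm : ContDiff ℝ ∞ fun x : V ↦ (φ x : ℂ) :=
    Complex.ofRealCLM.contDiff.comp hφsm
  have hsupp : HasCompactSupport fun x : V ↦ (φ x : ℂ) :=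
    hφsupp.comp_left (g := fun r : ℝ ↦ (r : ℂ)) rfl
  set φc : 𝓢(V, ℂ) := toSchwartz (fun x ↦ (φ x : ℂ)) hsm hsupp with hφc
  set ψ : 𝓢(V, ℂ) := (SchwartzMap.fourierTransformCLE ℂ 𝓢(V, ℂ)).symm φc with hψ
  have hψF : 𝓕 (⇑ψ) = fun x ↦ (φ x : ℂ) := by
    have h1 : SchwartzMap.fourierTransformCLE ℂ 𝓢(V, ℂ) ψ = φc :=
      (SchwartzMap.fourierTransformCLE ℂ 𝓢(V, ℂ)).apply_symm_apply φc
    have h2 : ⇑(SchwartzMap.fourierTransformCLE ℂ 𝓢(V, ℂ) ψ) = 𝓕 (⇑ψ) := by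
      exact SchwartzMap.fourier_coe ψ
    rw [← h2, h1]
    rfl
  have flip := VectorFourier.integral_fourierIntegral_smul_eq_flip (μ := (volume : Measure V))
      (ν := (volume : Measure V)) (L := innerₗ V) Real.continuous_fourierChar
      continuous_inner ψ.integrable hGi
  have hflipG : ∀ x : V,
      VectorFourier.fourierIntegral (Real.fourierChar) (volume : Measure V)
        (innerₗ V).flip G x = 𝓕 G x := by
    intro x
    simp only [VectorFourier.fourierIntegral,
      LinearMap.flip_apply, innerₗ_apply_apply]
    congr 1
    ext v
    rw [real_inner_comm]; rfl
  have hR : (∫ x, (⇑ψ) x • (VectorFourier.fourierIntegral (Real.fourierChar)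
      (volume : Measure V) (innerₗ V).flip G x) ∂volume) = 0 := by
    rw [integral_eq_zero_of_ae]
    filter_upwards with x
    rw [hflipG x, hF x, smul_zero]; rfl
  have hL : (∫ ξ, (VectorFourier.fourierIntegral (Real.fourierChar) (volume : Measure V)
      (innerₗ V) (⇑ψ) ξ) • G ξ ∂volume) = ∫ x, (φ x : ℂ) * G x ∂volume := by
    apply integral_congr_ae
    filter_upwards with ξ
    have : VectorFourier.fourierIntegral (Real.fourierChar) (volume : Measure V)
        (innerₗ V) (⇑ψ) ξ = 𝓕 (⇑ψ) ξ := rfl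
    rw [this, hψF, smul_eq_mul]
  calc ∫ x, φ x • G x ∂volume = ∫ x, (φ x : ℂ) * G x ∂volume := by
        apply integral_congr_ae; filter_upwards with x; rw [Complex.real_smul]
    _ = 0 := by rw [← hL, flip, hR]

end GWaux2

open GWaux GWaux2

/-- **Planar injectivity of the Gauss–Weierstrass transform for radial functions.**
If `f₁, f₂ : (0,∞) → ℝ` are measurable of polynomial growth and
`∫_{ℝ²} exp(−|y+ζ|²) f₁(|y|) dy = ∫_{ℝ²} exp(−|y+ζ|²) f₂(|y|) dy` for every `ζ ∈ ℝ²`,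
then `f₁ = f₂` a.e. on `(0,∞)`. -/
theorem gaussWeierstrass_injective_radial_plane
    (f₁ f₂ : ℝ → ℝ) (hf₁m : Measurable f₁) (hf₂m : Measurable f₂)
    (C : ℝ) (hC : 0 < C) (N : ℕ)
    (hf₁ : ∀ r > (0 : ℝ), |f₁ r| ≤ C * (1 + r) ^ N)
    (hf₂ : ∀ r > (0 : ℝ), |f₂ r| ≤ C * (1 + r) ^ N)
    (h : ∀ ζ : EuclideanSpace ℝ (Fin 2),
      (∫ y : EuclideanSpace ℝ (Fin 2), Real.exp (-‖y + ζ‖ ^ 2) * f₁ ‖y‖)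
        = ∫ y : EuclideanSpace ℝ (Fin 2), Real.exp (-‖y + ζ‖ ^ 2) * f₂ ‖y‖) :
    ∀ᵐ r ∂(volume.restrict (Set.Ioi (0 : ℝ))), f₁ r = f₂ r := by
  set g : ℝ → ℝ := fun r ↦ f₁ r - f₂ r with hgdef
  have hgm : Measurable g := hf₁m.sub hf₂m
  have hgb : ∀ r > (0:ℝ), |g r| ≤ (2 * C) * (1 + r) ^ N := by
    intro r hr
    have h1 := hf₁ r hr
    have h2 := hf₂ r hr
    have h3 : |g r| ≤ |f₁ r| + |f₂ r| := by
      rw [hgdef]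
      exact abs_sub _ _
    linarith
  -- Step 1: vanishing Gaussian convolution of g
  have hz0 : ∀ ζ : V, ∫ y : V, Real.exp (-‖y + ζ‖ ^ 2) * g ‖y‖ = 0 := by
    intro ζ
    have i1 := integrable_kernel f₁ hf₁m C N hf₁ ζ
    have i2 := integrable_kernel f₂ hf₂m C N hf₂ ζ
    have heq : (fun y : V ↦ Real.exp (-‖y + ζ‖ ^ 2) * g ‖y‖)
        = fun y : V ↦ Real.exp (-‖y + ζ‖ ^ 2) * f₁ ‖y‖
            - Real.exp (-‖y + ζ‖ ^ 2) * f₂ ‖y‖ := by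
      funext y
      simp only [hgdef]
      ring
    rw [heq, integral_sub i1 i2, h ζ, sub_self]
  -- Step 2: vanishing two-sided Laplace transform
  have hz3 : ∀ (w : V) (t : ℝ),
      ∫ y : V, Real.exp (t * ⟪y, w⟫) * (Real.exp (-‖y‖ ^ 2) * g ‖y‖) = 0 := by
    intro w t
    have h0 := hz0 ((-(t / 2)) • w)
    have heq : (fun y : V ↦ Real.exp (-‖y + (-(t / 2)) • w‖ ^ 2) * g ‖y‖)
        = fun y : V ↦ Real.exp (-‖(-(t / 2)) • w‖ ^ 2) *
            (Real.exp (t * ⟪y, w⟫) * (Real.exp (-‖y‖ ^ 2) * g ‖y‖)) := by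
      funext y
      have hn : ‖y + (-(t / 2)) • w‖ ^ 2
          = ‖y‖ ^ 2 + 2 * ⟪y, (-(t / 2)) • w⟫ + ‖(-(t / 2)) • w‖ ^ 2 :=
        norm_add_sq_real y _
      have hi : ⟪y, (-(t / 2)) • w⟫ = (-(t / 2)) * ⟪y, w⟫ := real_inner_smul_right y w _
      have hexp : Real.exp (-‖y + (-(t / 2)) • w‖ ^ 2)
          = Real.exp (-‖(-(t / 2)) • w‖ ^ 2) *
              (Real.exp (t * ⟪y, w⟫) * Real.exp (-‖y‖ ^ 2)) := by
        rw [← Real.exp_add, ← Real.exp_add]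
        congr 1
        rw [hn, hi]
        ring
      rw [hexp]
      ring
    rw [heq, integral_const_mul] at h0
    exact (mul_eq_zero.1 h0).resolve_left (Real.exp_ne_zero _)
  -- Step 3: Fourier transform of the Gaussian-damped function vanishes
  set G : V → ℝ := fun y ↦ Real.exp (-‖y‖ ^ 2) * g ‖y‖ with hGdef
  have hGm : Measurable G := by
    apply Measurable.mul
    · exact (Real.continuous_exp.comp (continuous_norm.pow 2).neg).measurable
    · exact hgm.comp measurable_norm
  have hGb : ∀ᵐ y : V ∂volume, |G y| ≤ (2 * C) * ((1 + ‖y‖) ^ N * Real.exp (-(‖y‖ ^ 2))) := by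
    filter_upwards [ae_norm_pos] with y hy
    rw [hGdef]
    simp only
    rw [abs_mul, abs_of_nonneg (Real.exp_nonneg _)]
    calc Real.exp (-‖y‖ ^ 2) * |g ‖y‖|
        ≤ Real.exp (-‖y‖ ^ 2) * ((2 * C) * (1 + ‖y‖) ^ N) :=
          mul_le_mul_of_nonneg_left (hgb _ hy) (Real.exp_nonneg _)
      _ = (2 * C) * ((1 + ‖y‖) ^ N * Real.exp (-(‖y‖ ^ 2))) := by ring
  have hGi : Integrable G := by
    refine Integrable.mono' ((integrable_majorant N 0).const_mul (2 * C))
      hGm.aestronglyMeasurable ?_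
    filter_upwards [hGb] with y hy
    rw [Real.norm_eq_abs]
    calc |G y| ≤ (2 * C) * ((1 + ‖y‖) ^ N * Real.exp (-(‖y‖ ^ 2))) := hy
      _ = (2 * C) * ((1 + ‖y‖) ^ N * Real.exp (0 * ‖y‖ - ‖y‖ ^ 2)) := by
          rw [zero_mul, zero_sub]
  have hF := fourier_vanish G hGm (2 * C) (by positivity) N hGb hz3
  have hae : ∀ᵐ y : V ∂volume, (G y : ℂ) = 0 :=
    ae_zero_of_fourier_zero _ hGi.ofReal hF
  have haeg : ∀ᵐ y : V ∂volume, g ‖y‖ = 0 := by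
    filter_upwards [hae] with y hy
    rw [Complex.ofReal_eq_zero, hGdef] at hy
    simp only at hy
    rcases mul_eq_zero.1 hy with h' | h'
    · exact absurd h' (Real.exp_ne_zero _)
    · exact h'
  -- Step 4: polar coordinates transfer
  set φ : ℝ → ℝ := fun r ↦ min |g r| 1 * Real.exp (-r) with hφdef
  have hφm : Measurable φ :=
    (hgm.abs.min measurable_const).mul (Real.measurable_exp.comp measurable_neg)
  have hLHS : ∫ x : V, φ ‖x‖ = 0 := by
    apply integral_eq_zero_of_ae
    filter_upwards [haeg] with y hy
    rw [hφdef]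
    simp [hy]
  have hpolar := integral_fun_norm_addHaar (volume : Measure V) φ
  simp only [finrank_euclideanSpace, Fintype.card_fin] at hpolar
  rw [hLHS] at hpolar
  have hc : 0 < (volume (ball (0 : V) 1)).toReal :=
    ENNReal.toReal_pos (measure_ball_pos volume 0 one_pos).ne' measure_ball_lt_top.ne
  have hI : ∫ y in Set.Ioi (0:ℝ), y * φ y = 0 := by
    have h1 : (∫ y in Set.Ioi (0:ℝ), y ^ (2 - 1) • φ y) = ∫ y in Set.Ioi (0:ℝ), y * φ y := by
      apply integral_congr_ae
      filter_upwards with y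
      norm_num
    rw [h1] at hpolar
    simp only [nsmul_eq_mul, smul_eq_mul, Nat.cast_ofNat] at hpolar
    have h2 := hpolar.symm
    have h3 := (mul_eq_zero.1 h2).resolve_left (by norm_num : (2:ℝ) ≠ 0)
    exact (mul_eq_zero.1 h3).resolve_left hc.ne'
  have hInt : IntegrableOn (fun y : ℝ ↦ y * φ y) (Set.Ioi (0:ℝ)) volume := by
    have hmaj : IntegrableOn (fun y : ℝ ↦ Real.exp (-y) * y) (Set.Ioi (0:ℝ)) volume := by
      have := Real.GammaIntegral_convergent (by norm_num : (0:ℝ) < 2)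
      refine this.congr_fun ?_ measurableSet_Ioi
      intro x hx
      simp only [show (2:ℝ) - 1 = 1 by norm_num, Real.rpow_one]
    refine Integrable.mono' hmaj (measurable_id.mul hφm).aestronglyMeasurable ?_
    rw [ae_restrict_iff' measurableSet_Ioi]
    filter_upwards with y hy
    have hy0 : (0:ℝ) < y := hy
    have hmin0 : 0 ≤ min |g y| 1 := le_min (abs_nonneg _) zero_le_one
    rw [Real.norm_eq_abs, hφdef]
    simp only
    rw [abs_of_nonneg (by positivity)]
    have : min |g y| 1 * Real.exp (-y) ≤ 1 * Real.exp (-y) :=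
      mul_le_mul_of_nonneg_right (min_le_right _ _) (Real.exp_nonneg _)
    nlinarith [Real.exp_nonneg (-y)]
  have hnn : 0 ≤ᵐ[volume.restrict (Set.Ioi (0:ℝ))] fun y ↦ y * φ y := by
    rw [EventuallyLE, ae_restrict_iff' measurableSet_Ioi]
    filter_upwards with y hy
    have hy0 : (0:ℝ) < y := hy
    have hmin0 : 0 ≤ min |g y| 1 := le_min (abs_nonneg _) zero_le_one
    simp only [Pi.zero_apply, hφdef]
    positivity
  have hzero := (integral_eq_zero_iff_of_nonneg_ae hnn hInt).1 hI
  rw [Filter.EventuallyEq] at hzero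
  filter_upwards [hzero, ae_restrict_mem measurableSet_Ioi] with r h1 h2
  have hr : (0:ℝ) < r := h2
  simp only [Pi.zero_apply] at h1
  have h3 : φ r = 0 := by
    rcases mul_eq_zero.1 h1 with h' | h'
    · exact absurd h' hr.ne'
    · exact h'
  rw [hφdef] at h3
  simp only at h3
  rcases mul_eq_zero.1 h3 with h' | h'
  · have : |g r| = 0 := by
      rcases min_eq_iff.1 h' with ⟨ha, _⟩ | ⟨hb, _⟩
      · exact ha
      · exact absurd hb one_ne_zero
    have hg0 : g r = 0 := abs_eq_zero.1 this
    rw [hgdef] at hg0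
    exact sub_eq_zero.1 hg0
  · exact absurd h' (Real.exp_ne_zero _)
end
end
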